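/- Let Q_1,…,Q_r ∈ ℂ[x_1,…,x_r] be algebraically independent polynomials such that ℂ[x_1,…,x_r] is a free module of finite rank N over the ℂ-subalgebra A generated by Q_1,…,Q_r. Let a = (a_1,…,a_r) ∈ ℂ^r be such that the Jacobian determinant det[∂Q_i/∂x_j] evaluates to a nonzero complex number at every point b of the fiber F = {b ∈ ℂ^r : Q_i(b) = a_i for all i}. Then F has exactly N elements. -/

import Mathlib

set_option maxHeartbeats 1000000
set_option synthInstance.maxHeartbeats 200000

open MvPolynomial Ideal Set

noncomputable section

namespace Stmt12Aux

variable {r N : ℕ}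

/-- generic induction lemma: f - C (eval b f) lies in the ideal generated by X j - C (b j). -/
lemma sub_C_eval_mem_span (b : Fin r → ℂ) (f : MvPolynomial (Fin r) ℂ) :
    f - C (eval b f) ∈ Ideal.span (Set.range fun j => (X j : MvPolynomial (Fin r) ℂ) - C (b j)) := by
  induction f using MvPolynomial.induction_on with
  | C c => simp
  | add f g hf hg =>
    have : f + g - C (eval b (f + g)) = (f - C (eval b f)) + (g - C (eval b g)) := by
      rw [map_add, map_add]; ring
    rw [this]; exact add_mem hf hg
  | mul_X f i hf =>
    have : f * X i - C (eval b (f * X i))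
        = f * (X i - C (b i)) + C (b i) * (f - C (eval b f)) := by
      rw [_root_.map_mul, eval_X, _root_.map_mul]; ring
    rw [this]
    exact add_mem (Ideal.mul_mem_left _ _ (Ideal.subset_span ⟨i, rfl⟩))
      (Ideal.mul_mem_left _ _ hf)

lemma vanishingIdeal_singleton_eq_span (b : Fin r → ℂ) :
    (vanishingIdeal ℂ {b} : Ideal (MvPolynomial (Fin r) ℂ))
      = Ideal.span (Set.range fun j => (X j : MvPolynomial (Fin r) ℂ) - C (b j)) := by
  apply le_antisymm
  · intro f hf
    rw [mem_vanishingIdeal_singleton_iff, aeval_eq_eval] at hf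
    simpa [hf] using sub_C_eval_mem_span b f
  · rw [Ideal.span_le]
    rintro _ ⟨j, rfl⟩
    rw [SetLike.mem_coe, mem_vanishingIdeal_singleton_iff]
    simp


lemma aeval_sub_C_mem (Q : Fin r → MvPolynomial (Fin r) ℂ) (a : Fin r → ℂ)
    (p : MvPolynomial (Fin r) ℂ) :
    aeval Q p - C (eval a p) ∈
      Ideal.span (Set.range fun i => Q i - C (a i)) := by
  induction p using MvPolynomial.induction_on with
  | C c => simp
  | add f g hf hg =>
    have : aeval Q (f + g) - C (eval a (f + g))
        = (aeval Q f - C (eval a f)) + (aeval Q g - C (eval a g)) := by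
      rw [_root_.map_add, _root_.map_add, _root_.map_add]; ring
    rw [this]; exact add_mem hf hg
  | mul_X f i hf =>
    have : aeval Q (f * X i) - C (eval a (f * X i))
        = aeval Q f * (Q i - C (a i)) + C (a i) * (aeval Q f - C (eval a f)) := by
      rw [_root_.map_mul, _root_.map_mul, eval_X, aeval_X, _root_.map_mul]; ring
    rw [this]
    exact add_mem (Ideal.mul_mem_left _ _ (Ideal.subset_span ⟨i, rfl⟩))
      (Ideal.mul_mem_left _ _ hf)

/-- first-order Taylor expansion: the remainder lies in `m_b ^ 2`. -/
lemma taylor_mem (b : Fin r → ℂ) (f : MvPolynomial (Fin r) ℂ) :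
    f - C (eval b f) - ∑ j, C (eval b (pderiv j f)) * (X j - C (b j))
      ∈ (Ideal.span (Set.range fun j => (X j : MvPolynomial (Fin r) ℂ) - C (b j))) ^ 2 := by
  set m := Ideal.span (Set.range fun j => (X j : MvPolynomial (Fin r) ℂ) - C (b j)) with hm
  induction f using MvPolynomial.induction_on with
  | C c => simp
  | add f g hf hg =>
    have : f + g - C (eval b (f + g)) - ∑ j, C (eval b (pderiv j (f + g))) * (X j - C (b j))
        = (f - C (eval b f) - ∑ j, C (eval b (pderiv j f)) * (X j - C (b j)))
          + (g - C (eval b g) - ∑ j, C (eval b (pderiv j g)) * (X j - C (b j))) := by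
      simp only [_root_.map_add, add_mul, Finset.sum_add_distrib]
      ring
    rw [this]; exact add_mem hf hg
  | mul_X f i hf =>
    have hsum : ∀ j, C (eval b (pderiv j (f * X i))) * (X j - C (b j))
        = (if j = i then C (eval b f) * (X i - C (b i)) else 0)
          + C (b i) * (C (eval b (pderiv j f)) * (X j - C (b j))) := by
      intro j
      rw [pderiv_mul, pderiv_X]
      by_cases h : j = i
      · subst h
        simp [Pi.single_eq_same, _root_.map_add, _root_.map_mul]
        ring
      · simp only [Pi.single_eq_of_ne (Ne.symm h), _root_.map_mul, map_zero, zero_mul,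
          add_zero, if_neg h, _root_.map_add, eval_X]
        ring
    have key : f * X i - C (eval b (f * X i))
          - ∑ j, C (eval b (pderiv j (f * X i))) * (X j - C (b j))
        = C (b i) * (f - C (eval b f) - ∑ j, C (eval b (pderiv j f)) * (X j - C (b j)))
          + (X i - C (b i)) * (f - C (eval b f)) := by
      simp only [hsum, Finset.sum_add_distrib, Finset.sum_ite_eq', Finset.mem_univ, if_true,
        ← Finset.mul_sum, _root_.map_mul, eval_X]
      ring
    rw [key]
    refine add_mem (Ideal.mul_mem_left _ _ hf) ?_
    rw [sq]
    exact Ideal.mul_mem_mul (Ideal.subset_span ⟨i, rfl⟩) (sub_C_eval_mem_span b f)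


section GenIdeal
variable {R : Type*} [CommRing R] {ι : Type*}

lemma inf_le_prod_of_pairwise_coprime (s : Finset ι) (f : ι → Ideal R)
    (h : ∀ i ∈ s, ∀ j ∈ s, i ≠ j → f i ⊔ f j = ⊤) :
    (⨅ i ∈ s, f i) ≤ ∏ i ∈ s, f i := by
  classical
  induction s using Finset.induction_on with
  | empty => simp
  | insert a s ha ih =>
    rw [Finset.prod_insert ha]
    have hcop : f a ⊔ ∏ i ∈ s, f i = ⊤ :=
      Ideal.sup_prod_eq_top fun i hi =>
        h a (Finset.mem_insert_self a s) i (Finset.mem_insert_of_mem hi)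
          (fun e => ha (e ▸ hi))
    rw [Ideal.mul_eq_inf_of_coprime hcop]
    refine le_inf (iInf₂_le a (Finset.mem_insert_self a s)) ?_
    refine le_trans (le_iInf₂ fun i hi => iInf₂_le i (Finset.mem_insert_of_mem hi)) ?_
    exact ih fun i hi j hj hij =>
      h i (Finset.mem_insert_of_mem hi) j (Finset.mem_insert_of_mem hj) hij

lemma sup_mul_sup_le (I A B : Ideal R) : (I ⊔ A) * (I ⊔ B) ≤ I ⊔ A * B := by
  rw [Ideal.mul_sup, Ideal.sup_mul, Ideal.sup_mul]
  refine sup_le (sup_le ?_ ?_) (sup_le ?_ ?_)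
  · exact le_trans Ideal.mul_le_left le_sup_left
  · exact le_trans Ideal.mul_le_right le_sup_left
  · exact le_trans Ideal.mul_le_left le_sup_left
  · exact le_sup_right

lemma prod_mono' (s : Finset ι) (f g : ι → Ideal R) (h : ∀ i ∈ s, f i ≤ g i) :
    (∏ i ∈ s, f i) ≤ ∏ i ∈ s, g i := by
  classical
  induction s using Finset.induction_on with
  | empty => simp
  | insert a s ha ih =>
    rw [Finset.prod_insert ha, Finset.prod_insert ha]
    exact Ideal.mul_mono (h a (Finset.mem_insert_self a s))
      (ih fun i hi => h i (Finset.mem_insert_of_mem hi))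

lemma prod_sup_le (s : Finset ι) (I : Ideal R) (f : ι → Ideal R) :
    (∏ i ∈ s, (I ⊔ f i)) ≤ I ⊔ ∏ i ∈ s, f i := by
  classical
  induction s using Finset.induction_on with
  | empty => simp
  | insert a s ha ih =>
    rw [Finset.prod_insert ha, Finset.prod_insert ha]
    exact le_trans (Ideal.mul_mono_right ih) (sup_mul_sup_le I (f a) _)

lemma le_of_le_sup_pow {K I : Ideal R} (hKfg : K.FG) (hrad : K ≤ I.radical)
    (hstep : K ≤ I ⊔ K ^ 2) : K ≤ I := by
  have hn : ∀ n : ℕ, K ≤ I ⊔ K ^ n := by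
    intro n
    induction n with
    | zero => simp [Ideal.one_eq_top]
    | succ n ih =>
      refine le_trans hstep (sup_le le_sup_left ?_)
      have h1 : K ^ 2 ≤ K * (I ⊔ K ^ n) := by
        rw [sq]; exact Ideal.mul_mono_right ih
      refine le_trans h1 ?_
      rw [Ideal.mul_sup]
      refine sup_le (le_trans Ideal.mul_le_right le_sup_left) ?_
      rw [pow_succ, mul_comm]
      exact le_sup_right
  obtain ⟨n, hpow⟩ := Ideal.exists_pow_le_of_le_radical_of_fg hrad hKfg
  exact le_trans (hn n) (sup_le le_rfl hpow)


end GenIdeal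

lemma l5 (Q : Fin r → MvPolynomial (Fin r) ℂ) (a : Fin r → ℂ) (b : Fin r → ℂ)
    (hb : ∀ i, eval b (Q i) = a i)
    (hdet : eval b (Matrix.of fun i j : Fin r => pderiv j (Q i)).det ≠ 0)
    (taylor_mem : ∀ f : MvPolynomial (Fin r) ℂ,
      f - C (eval b f) - ∑ j, C (eval b (pderiv j f)) * (X j - C (b j))
        ∈ (Ideal.span (Set.range fun j => (X j : MvPolynomial (Fin r) ℂ) - C (b j))) ^ 2) :
    (vanishingIdeal ℂ {b} : Ideal (MvPolynomial (Fin r) ℂ))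
      ≤ Ideal.span (Set.range fun i => Q i - C (a i)) ⊔ (vanishingIdeal ℂ {b}) ^ 2 := by
  set I := Ideal.span (Set.range fun i => Q i - C (a i)) with hI
  set m : Ideal (MvPolynomial (Fin r) ℂ) :=
    Ideal.span (Set.range fun j => (X j : MvPolynomial (Fin r) ℂ) - C (b j)) with hmdef
  have hmv : (vanishingIdeal ℂ {b} : Ideal (MvPolynomial (Fin r) ℂ)) = m :=
    vanishingIdeal_singleton_eq_span b
  rw [hmv]
  -- the evaluated Jacobian matrix
  set M : Matrix (Fin r) (Fin r) ℂ := Matrix.of fun i j => eval b (pderiv j (Q i)) with hM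
  have hMdet : IsUnit M.det := by
    apply isUnit_iff_ne_zero.mpr
    have : M = (Matrix.of fun i j : Fin r => pderiv j (Q i)).map (eval b) := rfl
    rw [this, ← RingHom.mapMatrix_apply, ← RingHom.map_det]
    exact hdet
  have hNM : M⁻¹ * M = 1 := Matrix.nonsing_inv_mul M hMdet
  -- each row combination lies in I ⊔ m^2
  have hrow : ∀ i, (∑ j, C (M i j) * (X j - C (b j)) : MvPolynomial (Fin r) ℂ) ∈ I ⊔ m ^ 2 := by
    intro i
    have h1 := taylor_mem (Q i)
    have h2 : Q i - C (a i) ∈ I := Ideal.subset_span ⟨i, rfl⟩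
    have : (∑ j, C (M i j) * (X j - C (b j)) : MvPolynomial (Fin r) ℂ)
        = (Q i - C (a i)) - (Q i - C (eval b (Q i))
            - ∑ j, C (eval b (pderiv j (Q i))) * (X j - C (b j))) := by
      have hMij : ∀ j, (C (M i j) : MvPolynomial (Fin r) ℂ)
          = C (eval b (pderiv j (Q i))) := fun _ => rfl
      rw [hb i]
      simp only [hMij]
      ring
    rw [this]
    exact sub_mem (Ideal.mem_sup_left h2) (Ideal.mem_sup_right h1)
  -- invert the matrix
  have hgen : ∀ k, (X k - C (b k) : MvPolynomial (Fin r) ℂ) ∈ I ⊔ m ^ 2 := by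
    intro k
    have key : (X k - C (b k) : MvPolynomial (Fin r) ℂ)
        = ∑ i, C (M⁻¹ k i) * ∑ j, C (M i j) * (X j - C (b j)) := by
      calc (X k - C (b k) : MvPolynomial (Fin r) ℂ)
          = ∑ j, C ((1 : Matrix (Fin r) (Fin r) ℂ) k j) * (X j - C (b j)) := by
            rw [Finset.sum_eq_single k]
            · simp [Matrix.one_apply_eq]
            · intro j _ hj; simp [Matrix.one_apply_ne' hj]
            · intro h; exact absurd (Finset.mem_univ k) h
        _ = ∑ j, C ((M⁻¹ * M) k j) * (X j - C (b j)) := by rw [hNM]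
        _ = ∑ i, C (M⁻¹ k i) * ∑ j, C (M i j) * (X j - C (b j)) := by
            simp only [Matrix.mul_apply, map_sum, Finset.sum_mul, Finset.mul_sum, _root_.map_mul,
              mul_assoc]
            rw [Finset.sum_comm]
    rw [key]
    exact Ideal.sum_mem _ fun i _ => Ideal.mul_mem_left _ _ (hrow i)
  rw [hmdef, Ideal.span_le]
  rintro _ ⟨k, rfl⟩
  exact hgen k


lemma quot_basis (Q : Fin r → MvPolynomial (Fin r) ℂ)
    (hQ : AlgebraicIndependent ℂ Q)
    (B : Module.Basis (Fin N) (Algebra.adjoin ℂ (Set.range Q)) (MvPolynomial (Fin r) ℂ))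
    (a : Fin r → ℂ)
    (haev : ∀ p : MvPolynomial (Fin r) ℂ, aeval Q p - C (eval a p) ∈
      Ideal.span (Set.range fun i => Q i - C (a i))) :
    Nonempty (Module.Basis (Fin N) ℂ
      ((MvPolynomial (Fin r) ℂ) ⧸ Ideal.span (Set.range fun i => Q i - C (a i)))) := by
  set I := Ideal.span (Set.range fun i => Q i - C (a i)) with hI
  -- the character of A corresponding to the point a
  set χ : Algebra.adjoin ℂ (Set.range Q) →ₐ[ℂ] ℂ :=
    (MvPolynomial.aeval a).comp
      (hQ.aevalEquiv.symm : Algebra.adjoin ℂ (Set.range Q) →ₐ[ℂ] MvPolynomial (Fin r) ℂ) with hχ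
  have hχ_apply : ∀ p : MvPolynomial (Fin r) ℂ, χ (hQ.aevalEquiv p) = eval a p := by
    intro p
    have : χ (hQ.aevalEquiv p) = MvPolynomial.aeval a p := by
      simp [hχ, AlgEquiv.symm_apply_apply]
    rw [this, ← coe_aeval_eq_eval]
    rfl
  have hχ_coe : ∀ c : Algebra.adjoin ℂ (Set.range Q),
      (c : MvPolynomial (Fin r) ℂ) - C (χ c) ∈ I := by
    intro c
    obtain ⟨p, rfl⟩ := hQ.aevalEquiv.surjective c
    rw [hχ_apply p]
    have hcoe : ((hQ.aevalEquiv p : Algebra.adjoin ℂ (Set.range Q)) : MvPolynomial (Fin r) ℂ)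
        = aeval Q p := hQ.algebraMap_aevalEquiv p
    rw [hcoe]
    exact haev p
  -- the elements of A corresponding to the generators of I
  set gA : Fin r → Algebra.adjoin ℂ (Set.range Q) := fun i =>
    ⟨Q i, Algebra.subset_adjoin (Set.mem_range_self i)⟩ - algebraMap ℂ _ (a i) with hgA
  have hgA_coe : ∀ i, ((gA i : Algebra.adjoin ℂ (Set.range Q)) : MvPolynomial (Fin r) ℂ)
      = Q i - C (a i) := by
    intro i
    simp [hgA, Subalgebra.coe_algebraMap, algebraMap_eq]
  have hgA_χ : ∀ i, χ (gA i) = 0 := by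
    intro i
    have h1 : hQ.aevalEquiv (X i) = (⟨Q i, Algebra.subset_adjoin (Set.mem_range_self i)⟩ :
        Algebra.adjoin ℂ (Set.range Q)) := by
      apply Subtype.ext
      have h := hQ.algebraMap_aevalEquiv (X i)
      simpa using h
    rw [hgA]
    simp only [map_sub, AlgHom.commutes, Algebra.algebraMap_self, RingHom.id_apply, ← h1,
      hχ_apply]
    simp
  -- the candidate basis of the quotient
  set π := Ideal.Quotient.mkₐ ℂ I with hπ
  set v : Fin N → (MvPolynomial (Fin r) ℂ ⧸ I) := fun j => π (B j) with hv
  have hπ_smul : ∀ (c : Algebra.adjoin ℂ (Set.range Q)) (x : MvPolynomial (Fin r) ℂ),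
      π (c • x) = χ c • π x := by
    intro c x
    have h1 : c • x = C (χ c) * x + ((c : MvPolynomial (Fin r) ℂ) - C (χ c)) * x := by
      rw [Subalgebra.smul_def, smul_eq_mul]; ring
    rw [h1, map_add, _root_.map_mul]
    have h2 : π (((c : MvPolynomial (Fin r) ℂ) - C (χ c)) * x) = 0 := by
      show Ideal.Quotient.mk I _ = 0
      exact Ideal.Quotient.eq_zero_iff_mem.mpr (I.mul_mem_right x (hχ_coe c))
    rw [h2, add_zero]
    rw [show (C (χ c) : MvPolynomial (Fin r) ℂ) = algebraMap ℂ _ (χ c) from rfl,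
      AlgHom.commutes]
    exact (Algebra.smul_def _ _).symm
  have hspan : ⊤ ≤ Submodule.span ℂ (Set.range v) := by
    rintro x -
    obtain ⟨f, rfl⟩ := Ideal.Quotient.mkₐ_surjective ℂ I x
    have hf : ∑ j, B.repr f j • B j = f := B.sum_repr f
    have : π f = ∑ j, χ (B.repr f j) • v j := by
      conv_lhs => rw [← hf]
      rw [map_sum]
      exact Finset.sum_congr rfl fun j _ => hπ_smul _ _
    rw [this]
    exact Submodule.sum_mem _ fun j _ =>
      Submodule.smul_mem _ _ (Submodule.subset_span (Set.mem_range_self j))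
  have hind : LinearIndependent ℂ v := by
    rw [Fintype.linearIndependent_iff]
    intro g hg
    -- turn the relation into membership in I
    have h1 : (∑ j, (algebraMap ℂ (Algebra.adjoin ℂ (Set.range Q)) (g j)) • B j) ∈ I := by
      have hπ1 : π (∑ j, (algebraMap ℂ (Algebra.adjoin ℂ (Set.range Q)) (g j)) • B j)
          = ∑ j, g j • v j := by
        rw [map_sum]
        refine Finset.sum_congr rfl fun j _ => ?_
        rw [hπ_smul, AlgHom.commutes]
        rfl
      rw [← Ideal.Quotient.eq_zero_iff_mem]
      show π _ = 0
      rw [hπ1]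
      exact hg
    obtain ⟨h, hh⟩ := Ideal.mem_span_range_iff_exists_fun.mp h1
    -- rewrite the left side as an A-linear combination
    have h2 : ∑ i, h i * (Q i - C (a i)) = ∑ i, gA i • h i := by
      refine Finset.sum_congr rfl fun i _ => ?_
      rw [Subalgebra.smul_def, smul_eq_mul, hgA_coe, mul_comm]
    rw [h2] at hh
    have h4 : ∀ j, algebraMap ℂ (Algebra.adjoin ℂ (Set.range Q)) (g j)
        = ∑ i, gA i * B.repr (h i) j := by
      intro j
      have hR : B.repr (∑ j', (algebraMap ℂ (Algebra.adjoin ℂ (Set.range Q)) (g j')) • B j') j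
          = algebraMap ℂ (Algebra.adjoin ℂ (Set.range Q)) (g j) := by
        rw [B.repr_sum_self]
      have hL : B.repr (∑ i, gA i • h i) j = ∑ i, gA i * B.repr (h i) j := by
        rw [map_sum, Finsupp.finset_sum_apply]
        refine Finset.sum_congr rfl fun i _ => ?_
        rw [map_smul, Finsupp.smul_apply, smul_eq_mul]
      rw [← hR, ← hh, hL]
    intro j
    have h5 := congrArg χ (h4 j)
    rw [map_sum, AlgHom.commutes] at h5
    simp only [_root_.map_mul, hgA_χ, zero_mul, Finset.sum_const_zero,
      Algebra.algebraMap_self, RingHom.id_apply] at h5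
    exact h5
  exact ⟨Module.Basis.mk hind hspan⟩


end Stmt12Aux

open Stmt12Aux

/-- If `ℂ[x₁,…,x_r]` is free of rank `N` over the subalgebra generated by
algebraically independent `Q₁,…,Q_r`, and the Jacobian determinant
`det [∂Q_i/∂x_j]` is nonzero at every point of the fiber
`F = {b : Q_i(b) = a_i for all i}`, then `F` has exactly `N` elements. -/
theorem stmt12 {r : ℕ} (Q : Fin r → MvPolynomial (Fin r) ℂ)
    (hQ : AlgebraicIndependent ℂ Q) (N : ℕ)
    (B : Module.Basis (Fin N) (Algebra.adjoin ℂ (Set.range Q)) (MvPolynomial (Fin r) ℂ))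
    (a : Fin r → ℂ)
    (hJ : ∀ b ∈ {b : Fin r → ℂ | ∀ i, eval b (Q i) = a i},
      eval b (Matrix.of fun i j : Fin r => pderiv j (Q i)).det ≠ 0) :
    {b : Fin r → ℂ | ∀ i, eval b (Q i) = a i}.Finite ∧
      {b : Fin r → ℂ | ∀ i, eval b (Q i) = a i}.ncard = N := by
  classical
  set F := {b : Fin r → ℂ | ∀ i, eval b (Q i) = a i} with hF
  set I := Ideal.span (Set.range fun i => Q i - C (a i)) with hI
  -- membership in F kills I
  have hIker : ∀ b ∈ F, I ≤ RingHom.ker (eval b) := by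
    intro b hb
    rw [hI, Ideal.span_le]
    rintro _ ⟨i, rfl⟩
    rw [SetLike.mem_coe, RingHom.mem_ker, map_sub, eval_C, hb i, sub_self]
  have hFz : F = MvPolynomial.zeroLocus ℂ I := by
    ext b
    constructor
    · intro hb p hp
      exact hIker b hb hp
    · intro hb i
      have := hb _ (Ideal.subset_span ⟨i, rfl⟩ : Q i - C (a i) ∈ I)
      rw [aeval_eq_eval, map_sub, eval_C, sub_eq_zero] at this
      exact this
  -- the quotient is an N-dimensional ℂ-vector space
  obtain ⟨bB⟩ := quot_basis Q hQ B a (aeval_sub_C_mem Q a)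
  haveI : Module.Finite ℂ (MvPolynomial (Fin r) ℂ ⧸ I) := Module.Finite.of_basis bB
  have hfinrank : Module.finrank ℂ (MvPolynomial (Fin r) ℂ ⧸ I) = N :=
    (Module.finrank_eq_card_basis bB).trans (Fintype.card_fin N)
  -- evaluation algebra homs on the quotient
  have hvanish : ∀ b : F, ∀ p ∈ I, (aeval (b : Fin r → ℂ)) p = 0 := by
    intro b p hp
    have h := hIker (b : Fin r → ℂ) b.2 hp
    rw [RingHom.mem_ker] at h
    rw [← coe_aeval_eq_eval] at h
    exact h
  set Λ : F → ((MvPolynomial (Fin r) ℂ ⧸ I) →ₐ[ℂ] ℂ) := fun b =>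
    Ideal.Quotient.liftₐ I (aeval (b : Fin r → ℂ)) (hvanish b) with hΛ
  have hΛ_mk : ∀ (b : F) (p : MvPolynomial (Fin r) ℂ),
      Λ b (Ideal.Quotient.mk I p) = eval (b : Fin r → ℂ) p := by
    intro b p
    simp only [hΛ, Ideal.Quotient.liftₐ_apply, Ideal.Quotient.lift_mk]
    rw [← coe_aeval_eq_eval]
    rfl
  have hΛinj : Function.Injective Λ := by
    intro b b' h
    apply Subtype.ext; funext i
    have h1 := congrArg (fun φ => φ (Ideal.Quotient.mk I (X i))) h
    simp only [hΛ_mk, eval_X] at h1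
    exact h1
  -- upper bound: linear independence of characters
  have hLI : LinearIndependent ℂ (fun b : F => (Λ b).toLinearMap) :=
    (linearIndependent_algHom_toLinearMap' ℂ (MvPolynomial (Fin r) ℂ ⧸ I) ℂ).comp Λ hΛinj
  have hFfin : F.Finite := by
    rw [← Set.finite_coe_iff, ← Cardinal.lt_aleph0_iff_finite]
    exact hLI.lt_aleph0_of_finite
  haveI : Fintype F := hFfin.fintype
  have hcard_le : Fintype.card F ≤ N := by
    have h1 := hLI.fintype_card_le_finrank
    rwa [Module.finrank_linearMap, Module.finrank_self, mul_one, hfinrank] at h1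
  -- the radical argument : vanishingIdeal F ≤ I
  have hrad : MvPolynomial.vanishingIdeal ℂ F ≤ I := by
    set K := MvPolynomial.vanishingIdeal ℂ F with hK
    have hKrad : K = I.radical := by
      rw [hK, hFz, MvPolynomial.vanishingIdeal_zeroLocus_eq_radical]
    set s := hFfin.toFinset with hs
    have hsF : ∀ b ∈ s, b ∈ F := fun b hb => hFfin.mem_toFinset.mp hb
    -- K as an infimum over the points of the fiber
    have hKinf : K = ⨅ b ∈ s, MvPolynomial.vanishingIdeal ℂ {b} := by
      apply le_antisymm
      · exact le_iInf₂ fun b hb => MvPolynomial.vanishingIdeal_anti_mono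
          (Set.singleton_subset_iff.mpr (hsF b hb))
      · intro p hp
        rw [MvPolynomial.mem_vanishingIdeal_iff]
        intro x hx
        have hps := Ideal.mem_iInf.mp hp x
        have := Ideal.mem_iInf.mp (hps) (hFfin.mem_toFinset.mpr hx)
        exact MvPolynomial.mem_vanishingIdeal_singleton_iff x p |>.mp this
      -- note : fix the iInf₂ membership handling below if needed
    -- pairwise coprimality
    have hcop : ∀ b ∈ s, ∀ b' ∈ s, b ≠ b' →
        MvPolynomial.vanishingIdeal ℂ {b} ⊔ MvPolynomial.vanishingIdeal ℂ {b'} = ⊤ := by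
      intro b _ b' _ hne
      refine Ideal.IsMaximal.coprime_of_ne inferInstance
        inferInstance ?_
      intro he
      apply hne
      funext i
      have : (X i - C (b i) : MvPolynomial (Fin r) ℂ) ∈
          MvPolynomial.vanishingIdeal ℂ ({b'} : Set (Fin r → ℂ)) := by
        rw [← he, MvPolynomial.mem_vanishingIdeal_singleton_iff, aeval_eq_eval, map_sub, eval_X, eval_C,
          sub_self]
      rw [MvPolynomial.mem_vanishingIdeal_singleton_iff, aeval_eq_eval, map_sub, eval_X, eval_C,
        sub_eq_zero] at this
      exact this.symm
    -- each local piece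
    have hloc : ∀ b ∈ s, MvPolynomial.vanishingIdeal ℂ ({b} : Set (Fin r → ℂ))
        ≤ I ⊔ (MvPolynomial.vanishingIdeal ℂ ({b} : Set (Fin r → ℂ))) ^ 2 := by
      intro b hb
      exact l5 Q a b (hsF b hb) (hJ b (hsF b hb)) (taylor_mem b)
    -- assemble : K ≤ I ⊔ K ^ 2
    have hstep : K ≤ I ⊔ K ^ 2 := by
      set P := ∏ b ∈ s, MvPolynomial.vanishingIdeal ℂ ({b} : Set (Fin r → ℂ)) with hP
      have hKP : K ≤ P := by
        rw [hKinf]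
        exact inf_le_prod_of_pairwise_coprime s _ hcop
      have hPK : P ≤ K := by
        rw [hKinf]
        exact le_trans Ideal.prod_le_inf (le_of_eq (Finset.inf_eq_iInf _ _))
      have h1 : P ≤ ∏ b ∈ s, (I ⊔ (MvPolynomial.vanishingIdeal ℂ ({b} : Set (Fin r → ℂ))) ^ 2) := by
        rw [hP]
        exact prod_mono' s _ _ fun b hb => hloc b hb
      have h2 : (∏ b ∈ s, (I ⊔ (MvPolynomial.vanishingIdeal ℂ ({b} : Set (Fin r → ℂ))) ^ 2))
          ≤ I ⊔ ∏ b ∈ s, (MvPolynomial.vanishingIdeal ℂ ({b} : Set (Fin r → ℂ))) ^ 2 :=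
        prod_sup_le s I _
      have h3 : (∏ b ∈ s, (MvPolynomial.vanishingIdeal ℂ ({b} : Set (Fin r → ℂ))) ^ 2) = P ^ 2 := by
        rw [hP, ← Finset.prod_pow]
      have h4 : P ^ 2 ≤ K ^ 2 := by
        rw [sq, sq]
        exact Ideal.mul_mono hPK hPK
      calc K ≤ P := hKP
        _ ≤ ∏ b ∈ s, (I ⊔ (MvPolynomial.vanishingIdeal ℂ ({b} : Set (Fin r → ℂ))) ^ 2) := h1
        _ ≤ I ⊔ ∏ b ∈ s, (MvPolynomial.vanishingIdeal ℂ ({b} : Set (Fin r → ℂ))) ^ 2 := h2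
        _ = I ⊔ P ^ 2 := by rw [h3]
        _ ≤ I ⊔ K ^ 2 := sup_le_sup_left h4 I
    exact le_of_le_sup_pow (IsNoetherian.noetherian K) (le_of_eq hKrad) hstep
  -- lower bound: the evaluation map on the quotient is injective
  have hΦinj : Function.Injective
      (LinearMap.pi (fun b : F => (Λ b).toLinearMap) :
        (MvPolynomial (Fin r) ℂ ⧸ I) →ₗ[ℂ] (F → ℂ)) := by
    rw [← LinearMap.ker_eq_bot]
    rw [Submodule.eq_bot_iff]
    intro x hx
    obtain ⟨p, rfl⟩ := Ideal.Quotient.mk_surjective x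
    rw [LinearMap.mem_ker] at hx
    have hp : p ∈ MvPolynomial.vanishingIdeal ℂ F := by
      rw [MvPolynomial.mem_vanishingIdeal_iff]
      intro b hb
      have := congrFun hx ⟨b, hb⟩
      rwa [LinearMap.pi_apply, AlgHom.toLinearMap_apply, hΛ_mk, Pi.zero_apply] at this
    exact Ideal.Quotient.eq_zero_iff_mem.mpr (hrad hp)
  have hN_le : N ≤ Fintype.card F := by
    have h1 := LinearMap.finrank_le_finrank_of_injective hΦinj
    rwa [hfinrank, Module.finrank_pi] at h1
  refine ⟨hFfin, ?_⟩
  have : F.ncard = Fintype.card F := by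
    rw [← Nat.card_coe_set_eq, Nat.card_eq_fintype_card]
  omega
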